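/- The matrix M = [[2, 1, 1, −1], [1, 2, 0, 1], [1, 0, 2, −1], [−1, 1, −1, 2]] ∈ ℂ^{4×4} is positive semidefinite, is 3-incoherent, and is not 2-incoherent; that is, M has factor width exactly 3. -/

import Mathlib

open Matrix BigOperators Finset ComplexOrder

noncomputable section

/-- The number of nonzero entries of a vector in `ℂ^n`. -/
def suppCard {n : ℕ} (v : Fin n → ℂ) : ℕ :=
  (Finset.univ.filter fun i => v i ≠ 0).card

/-- A matrix `X` is `k`-incoherent if it can be written as `∑ vᵢ vᵢ*` where each `vᵢ`
has at most `k` nonzero entries. -/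
def KIncoherent {n : ℕ} (k : ℕ) (X : Matrix (Fin n) (Fin n) ℂ) : Prop :=
  ∃ (m : ℕ) (v : Fin m → (Fin n → ℂ)),
    (∀ i, suppCard (v i) ≤ k) ∧ X = ∑ i, vecMulVec (v i) (star (v i))

/-- The set `I_k` of positive semidefinite, `k`-incoherent matrices with trace at most `1`. -/
def Ik (n k : ℕ) : Set (Matrix (Fin n) (Fin n) ℂ) :=
  {X | X.PosSemidef ∧ KIncoherent k X ∧ X.trace.re ≤ 1}

/-- The Gram matrix of a list of vectors in `ℂ^d`. -/
def gramMatrix {n d : ℕ} (ψ : Fin n → (Fin d → ℂ)) : Matrix (Fin n) (Fin n) ℂ :=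
  Matrix.of fun i j => star (ψ i) ⬝ᵥ ψ j

/-- A list of states `ψ₁, …, ψₙ` is `k`-learnable if there is a POVM indexed by the
`k`-element subsets of `{1, …, n}` such that `⟨ψᵢ, M_S ψᵢ⟩ = 0` whenever `i ∉ S`. -/
def KLearnable {n d : ℕ} (k : ℕ) (ψ : Fin n → (Fin d → ℂ)) : Prop :=
  ∃ M : {S : Finset (Fin n) // S.card = k} → Matrix (Fin d) (Fin d) ℂ,
    (∀ S, (M S).PosSemidef) ∧ (∑ S, M S) = 1 ∧
    ∀ (S : {S : Finset (Fin n) // S.card = k}) (i : Fin n),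
      i ∉ S.val → star (ψ i) ⬝ᵥ ((M S) *ᵥ ψ i) = 0

/-- The Frobenius norm of a square complex matrix. -/
def frobNorm {m : ℕ} (A : Matrix (Fin m) (Fin m) ℂ) : ℝ :=
  Real.sqrt (∑ i, ∑ j, ‖A i j‖ ^ 2)

/-! ### Auxiliary lemmas -/

lemma vmv_psd {n : ℕ} (v : Fin n → ℂ) : (vecMulVec v (star v)).PosSemidef := by
  have h : vecMulVec v (star v) = (replicateRow Unit (star v))ᴴ * replicateRow Unit (star v) := by
    rw [vecMulVec_eq Unit]
    congr 1
    ext i j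
    simp [replicateRow, replicateCol]
  rw [h]
  exact posSemidef_conjTranspose_mul_self _

lemma sum_vmv_psd {n m : ℕ} (v : Fin m → (Fin n → ℂ)) :
    (∑ i, vecMulVec (v i) (star (v i))).PosSemidef := by
  induction m with
  | zero => simpa using Matrix.PosSemidef.zero
  | succ k ih => rw [Fin.sum_univ_succ]; exact (vmv_psd _).add (ih _)

lemma suppCard_le_of_zero (u : Fin 4 → ℂ) (i : Fin 4) (h : u i = 0) : suppCard u ≤ 3 := by
  have hsub : (Finset.univ.filter fun j => u j ≠ 0) ⊆ Finset.univ.erase i := by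
    intro x hx
    simp only [mem_filter, mem_univ, true_and] at hx
    refine Finset.mem_erase.2 ⟨?_, Finset.mem_univ _⟩
    rintro rfl; exact hx h
  have := Finset.card_le_card hsub
  simpa [suppCard, Finset.card_erase_of_mem] using this

lemma three_le_suppCard (u : Fin 4 → ℂ) (i j k : Fin 4) (hij : i ≠ j) (hik : i ≠ k)
    (hjk : j ≠ k) (hi : u i ≠ 0) (hj : u j ≠ 0) (hk : u k ≠ 0) : 3 ≤ suppCard u := by
  have hsub : ({i, j, k} : Finset (Fin 4)) ⊆ Finset.univ.filter fun x => u x ≠ 0 := by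
    intro x hx
    simp only [mem_insert, mem_singleton] at hx
    rcases hx with rfl | rfl | rfl <;> simp [hi, hj, hk]
  have hcard : ({i, j, k} : Finset (Fin 4)).card = 3 := by
    rw [Finset.card_insert_of_notMem (by simp [hij, hik]),
      Finset.card_insert_of_notMem (by simp [hjk]), Finset.card_singleton]
  calc 3 = ({i, j, k} : Finset (Fin 4)).card := hcard.symm
    _ ≤ _ := Finset.card_le_card hsub

lemma kinc3 : KIncoherent 3 !![(2 : ℂ), 1, 1, -1; 1, 2, 0, 1; 1, 0, 2, -1; -1, 1, -1, 2] := by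
  refine ⟨3, ![![1,1,1,0], ![1,0,0,-1], ![0,1,-1,1]], ?_, ?_⟩
  · intro i
    fin_cases i
    · exact suppCard_le_of_zero _ 3 rfl
    · exact suppCard_le_of_zero _ 1 rfl
    · exact suppCard_le_of_zero _ 0 rfl
  · ext a b
    rw [Fin.sum_univ_three]
    fin_cases a <;> fin_cases b <;>
      simp only [Matrix.add_apply, vecMulVec_apply] <;> simp [vecMulVec_apply, vecHead, vecTail] <;> norm_num

/-- indicator term for an edge -/
def edgeTerm (u : Fin 4 → ℂ) (a b : Fin 4) : ℝ :=
  if u a ≠ 0 ∧ u b ≠ 0 then ‖u a‖ ^ 2 + ‖u b‖ ^ 2 else 0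

set_option linter.unnecessarySeqFocus false in
lemma perell (u : Fin 4 → ℂ) (h : suppCard u ≤ 2) :
    edgeTerm u 0 1 + edgeTerm u 0 2 + edgeTerm u 0 3 + edgeTerm u 1 3 + edgeTerm u 2 3 ≤
      ‖u 0‖ ^ 2 + ‖u 1‖ ^ 2 + ‖u 2‖ ^ 2 + ‖u 3‖ ^ 2 := by
  by_cases h0 : u 0 = 0 <;> by_cases h1 : u 1 = 0 <;> by_cases h2 : u 2 = 0 <;>
    by_cases h3 : u 3 = 0
  all_goals first
    | (exact absurd h (by
        first
          | (have := three_le_suppCard u 0 1 2 (by decide) (by decide) (by decide)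
              ‹_› ‹_› ‹_›; omega)
          | (have := three_le_suppCard u 0 1 3 (by decide) (by decide) (by decide)
              ‹_› ‹_› ‹_›; omega)
          | (have := three_le_suppCard u 0 2 3 (by decide) (by decide) (by decide)
              ‹_› ‹_› ‹_›; omega)
          | (have := three_le_suppCard u 1 2 3 (by decide) (by decide) (by decide)
              ‹_› ‹_› ‹_›; omega)))
    | (simp only [edgeTerm, h0, h1, h2, h3, ne_eq, not_true_eq_false, not_false_eq_true,
        false_and, and_false, and_true, true_and, if_true, if_false, if_neg, if_pos,
        norm_zero] <;> nlinarith [sq_nonneg ‖u 0‖, sq_nonneg ‖u 1‖, sq_nonneg ‖u 2‖,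
        sq_nonneg ‖u 3‖])

lemma normsq_re (z : ℂ) : (z * star z).re = ‖z‖ ^ 2 := by
  rw [show star z = starRingEnd ℂ z from rfl, Complex.mul_conj]
  simp [Complex.normSq_eq_norm_sq, ← Complex.ofReal_pow]

lemma not_kinc2 :
    ¬ KIncoherent 2 !![(2 : ℂ), 1, 1, -1; 1, 2, 0, 1; 1, 0, 2, -1; -1, 1, -1, 2] := by
  rintro ⟨m, v, hs, heq⟩
  set M : Matrix (Fin 4) (Fin 4) ℂ :=
    !![(2 : ℂ), 1, 1, -1; 1, 2, 0, 1; 1, 0, 2, -1; -1, 1, -1, 2] with hM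
  have key : ∀ a b, M a b = ∑ ℓ, v ℓ a * star (v ℓ b) := by
    intro a b
    rw [heq]
    simp [Matrix.sum_apply, vecMulVec_apply]
  have edge : ∀ a b, 2 * ‖M a b‖ ≤ ∑ ℓ, edgeTerm (v ℓ) a b := by
    intro a b
    rw [key]
    calc 2 * ‖∑ ℓ, v ℓ a * star (v ℓ b)‖ ≤ 2 * ∑ ℓ, ‖v ℓ a * star (v ℓ b)‖ := by
          have := norm_sum_le Finset.univ (fun ℓ => v ℓ a * star (v ℓ b))
          linarith
      _ = ∑ ℓ, 2 * ‖v ℓ a * star (v ℓ b)‖ := by rw [Finset.mul_sum]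
      _ ≤ ∑ ℓ, edgeTerm (v ℓ) a b := by
          apply Finset.sum_le_sum
          intro ℓ _
          unfold edgeTerm
          by_cases ha : v ℓ a = 0
          · simp [ha]
          by_cases hb : v ℓ b = 0
          · simp [hb]
          rw [if_pos ⟨ha, hb⟩, norm_mul, norm_star]
          nlinarith [sq_nonneg (‖v ℓ a‖ - ‖v ℓ b‖)]
  have diag : ∀ a, ∑ ℓ, ‖v ℓ a‖ ^ 2 = (M a a).re := by
    intro a
    rw [key a a, Complex.re_sum]
    exact Finset.sum_congr rfl fun ℓ _ => (normsq_re _).symm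
  have hsum : ∑ ℓ, (edgeTerm (v ℓ) 0 1 + edgeTerm (v ℓ) 0 2 + edgeTerm (v ℓ) 0 3 +
      edgeTerm (v ℓ) 1 3 + edgeTerm (v ℓ) 2 3) ≤
      ∑ ℓ, (‖v ℓ 0‖ ^ 2 + ‖v ℓ 1‖ ^ 2 + ‖v ℓ 2‖ ^ 2 + ‖v ℓ 3‖ ^ 2) :=
    Finset.sum_le_sum fun ℓ _ => perell (v ℓ) (hs ℓ)
  have hsplit : ∑ ℓ, (edgeTerm (v ℓ) 0 1 + edgeTerm (v ℓ) 0 2 + edgeTerm (v ℓ) 0 3 +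
      edgeTerm (v ℓ) 1 3 + edgeTerm (v ℓ) 2 3) =
      (∑ ℓ, edgeTerm (v ℓ) 0 1) + (∑ ℓ, edgeTerm (v ℓ) 0 2) + (∑ ℓ, edgeTerm (v ℓ) 0 3) +
      (∑ ℓ, edgeTerm (v ℓ) 1 3) + (∑ ℓ, edgeTerm (v ℓ) 2 3) := by
    simp [Finset.sum_add_distrib]
  have hsplit2 : ∑ ℓ, (‖v ℓ 0‖ ^ 2 + ‖v ℓ 1‖ ^ 2 + ‖v ℓ 2‖ ^ 2 + ‖v ℓ 3‖ ^ 2) =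
      (∑ ℓ, ‖v ℓ 0‖ ^ 2) + (∑ ℓ, ‖v ℓ 1‖ ^ 2) + (∑ ℓ, ‖v ℓ 2‖ ^ 2) + (∑ ℓ, ‖v ℓ 3‖ ^ 2) := by
    simp [Finset.sum_add_distrib]
  have e01 := edge 0 1
  have e02 := edge 0 2
  have e03 := edge 0 3
  have e13 := edge 1 3
  have e23 := edge 2 3
  have d0 := diag 0
  have d1 := diag 1
  have d2 := diag 2
  have d3 := diag 3
  have hv : ‖M 0 1‖ = 1 ∧ ‖M 0 2‖ = 1 ∧ ‖M 0 3‖ = 1 ∧ ‖M 1 3‖ = 1 ∧ ‖M 2 3‖ = 1 ∧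
      (M 0 0).re = 2 ∧ (M 1 1).re = 2 ∧ (M 2 2).re = 2 ∧ (M 3 3).re = 2 := by
    simp [hM]
  obtain ⟨n01, n02, n03, n13, n23, m0, m1, m2, m3⟩ := hv
  rw [n01] at e01; rw [n02] at e02; rw [n03] at e03; rw [n13] at e13; rw [n23] at e23
  rw [m0] at d0; rw [m1] at d1; rw [m2] at d2; rw [m3] at d3
  rw [hsplit, hsplit2] at hsum
  linarith

/-- The matrix `M = [[2,1,1,-1],[1,2,0,1],[1,0,2,-1],[-1,1,-1,2]]` is positive semidefinite,
`3`-incoherent, and not `2`-incoherent: it has factor width exactly `3`. -/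
theorem example_factor_width_three :
    (!![(2 : ℂ), 1, 1, -1; 1, 2, 0, 1; 1, 0, 2, -1; -1, 1, -1, 2]).PosSemidef ∧
    KIncoherent 3 !![(2 : ℂ), 1, 1, -1; 1, 2, 0, 1; 1, 0, 2, -1; -1, 1, -1, 2] ∧
    ¬ KIncoherent 2 !![(2 : ℂ), 1, 1, -1; 1, 2, 0, 1; 1, 0, 2, -1; -1, 1, -1, 2] := by
  refine ⟨?_, kinc3, not_kinc2⟩
  obtain ⟨m, v, -, heq⟩ := kinc3
  rw [heq]
  exact sum_vmv_psd v
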